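/- Let d and k be positive integers with k ≥ d. Then ∑_{k - d/2 ≤ k̄₁+...+k̄_d ≤ k} 1/(k̄₁!···k̄_d!) ≤ ⌈d/2⌉! · (d+1)^k / k!, where the sum ranges over d-tuples of nonnegative integers whose sum lies in [k - d/2, k]. -/
import Mathlib

open Finset

/-- For positive integers `d ≤ k`, the sum of `1/(k̄₁!⋯k̄_d!)` over `d`-tuples of nonnegative
integers whose sum lies in `[k - d/2, k]` is at most `⌈d/2⌉! (d+1)^k / k!`. -/
theorem stmt_7 (d k : ℕ) (hd : 0 < d) (hk : d ≤ k) :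
    ∑ f ∈ (Fintype.piFinset fun _ : Fin d => Finset.range (k + 1)).filter
        (fun f => (k : ℝ) - (d : ℝ) / 2 ≤ (∑ i, f i : ℕ) ∧ (∑ i, f i) ≤ k),
      (∏ i, (Nat.factorial (f i) : ℝ))⁻¹ ≤
    (Nat.factorial ((d + 1) / 2) : ℝ) * (d + 1 : ℝ) ^ k / (Nat.factorial k : ℝ) := by
  classical
  set S := (Fintype.piFinset fun _ : Fin d => Finset.range (k + 1)).filter
        (fun f => (k : ℝ) - (d : ℝ) / 2 ≤ (∑ i, f i : ℕ) ∧ (∑ i, f i) ≤ k) with hS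
  set T := Finset.piAntidiag (univ : Finset (Fin (d+1))) k with hT
  set C : ℝ := (Nat.factorial ((d + 1) / 2) : ℝ) with hC
  have hC0 : 0 ≤ C := by positivity
  -- Step 1 : the multinomial identity
  have hTsum : ∑ g ∈ T, (∏ i, (Nat.factorial (g i) : ℝ))⁻¹
      = (d + 1 : ℝ) ^ k / (Nat.factorial k : ℝ) := by
    rw [eq_div_iff (by positivity), Finset.sum_mul]
    have key : ∀ g ∈ T, (∏ i, (Nat.factorial (g i) : ℝ))⁻¹ * (Nat.factorial k : ℝ)
        = (Nat.multinomial univ g : ℝ) := by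
      intro g hg
      rw [mem_piAntidiag] at hg
      have hm := Nat.multinomial_spec (univ : Finset (Fin (d+1))) g
      rw [hg.1] at hm
      have : ((∏ i, Nat.factorial (g i) : ℕ) : ℝ) * (Nat.multinomial univ g : ℝ)
          = (Nat.factorial k : ℝ) := by exact_mod_cast congrArg (Nat.cast (R := ℝ)) hm
      push_cast at this
      field_simp
      linarith [this]
    rw [Finset.sum_congr rfl key]
    have := Finset.sum_pow_eq_sum_piAntidiag (univ : Finset (Fin (d+1))) (fun _ => (1 : ℝ)) k
    simp only [one_pow, prod_const_one, mul_one, sum_const, card_univ, Fintype.card_fin,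
      nsmul_eq_mul, mul_one] at this
    rw [← hT] at this
    push_cast at this ⊢
    linarith [this]
  -- the injection
  set e : (Fin d → ℕ) → (Fin (d+1) → ℕ) := fun f => Fin.snoc f (k - ∑ i, f i) with he
  have hinj : Function.Injective e := by
    intro f f' h
    funext i
    have := congrFun h (Fin.castSucc i)
    simpa [he, Fin.snoc_castSucc] using this
  -- termwise bound
  have hterm : ∀ f ∈ S, (∏ i, (Nat.factorial (f i) : ℝ))⁻¹
      ≤ C * (∏ i, (Nat.factorial (e f i) : ℝ))⁻¹ := by
    intro f hf
    rw [hS, mem_filter] at hf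
    obtain ⟨-, h1, h2⟩ := hf
    have hprod : (∏ i, (Nat.factorial (e f i) : ℝ))
        = (∏ i, (Nat.factorial (f i) : ℝ)) * (Nat.factorial (k - ∑ i, f i) : ℝ) := by
      rw [Fin.prod_univ_castSucc]
      simp [he, Fin.snoc_castSucc, Fin.snoc_last]
    have hle : k - (∑ i, f i) ≤ (d + 1) / 2 := by
      have h3 : ((k - ∑ i, f i : ℕ) : ℝ) ≤ (d : ℝ) / 2 := by
        rw [Nat.cast_sub h2]; linarith
      have h4 : 2 * (k - ∑ i, f i) ≤ d := by
        have : ((2 * (k - ∑ i, f i) : ℕ) : ℝ) ≤ (d : ℝ) := by push_cast; linarith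
        exact_mod_cast this
      omega
    have hfact : (Nat.factorial (k - ∑ i, f i) : ℝ) ≤ C := by
      rw [hC]; exact_mod_cast Nat.factorial_le hle
    rw [hprod, mul_inv]
    have hp0 : (0:ℝ) < ∏ i, (Nat.factorial (f i) : ℝ) := by positivity
    have hq0 : (0:ℝ) < (Nat.factorial (k - ∑ i, f i) : ℝ) := by positivity
    rw [mul_comm C]
    calc (∏ i, (Nat.factorial (f i) : ℝ))⁻¹
        = (∏ i, (Nat.factorial (f i) : ℝ))⁻¹ * ((Nat.factorial (k - ∑ i, f i) : ℝ))⁻¹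
          * (Nat.factorial (k - ∑ i, f i) : ℝ) := by field_simp
      _ ≤ (∏ i, (Nat.factorial (f i) : ℝ))⁻¹ * ((Nat.factorial (k - ∑ i, f i) : ℝ))⁻¹ * C := by
          apply mul_le_mul_of_nonneg_left hfact; positivity
  -- image included in T
  have himg : S.image e ⊆ T := by
    intro g hg
    rw [mem_image] at hg
    obtain ⟨f, hf, rfl⟩ := hg
    rw [hS, mem_filter] at hf
    obtain ⟨-, -, h2⟩ := hf
    rw [hT, mem_piAntidiag]
    refine ⟨?_, fun i _ => mem_univ i⟩
    rw [Fin.sum_univ_castSucc]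
    simp only [he, Fin.snoc_castSucc, Fin.snoc_last]
    omega
  calc ∑ f ∈ S, (∏ i, (Nat.factorial (f i) : ℝ))⁻¹
      ≤ ∑ f ∈ S, C * (∏ i, (Nat.factorial (e f i) : ℝ))⁻¹ := Finset.sum_le_sum hterm
    _ = C * ∑ g ∈ S.image e, (∏ i, (Nat.factorial (g i) : ℝ))⁻¹ := by
        rw [Finset.sum_image (fun a _ b _ h => hinj h), Finset.mul_sum]
    _ ≤ C * ∑ g ∈ T, (∏ i, (Nat.factorial (g i) : ℝ))⁻¹ := by
        apply mul_le_mul_of_nonneg_left _ hC0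
        apply Finset.sum_le_sum_of_subset_of_nonneg himg
        intro g _ _; positivity
    _ = C * ((d + 1 : ℝ) ^ k / (Nat.factorial k : ℝ)) := by rw [hTsum]
    _ = (Nat.factorial ((d + 1) / 2) : ℝ) * (d + 1 : ℝ) ^ k / (Nat.factorial k : ℝ) := by
        rw [hC]; ring
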